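/- Let N ≥ 2 and 1 ≤ i ≤ N-1. The state of an N-qubit W state after losing i qubits is the mixture σ_i = (i/N)·|0^{N-i}⟩⟨0^{N-i}| + ((N-i)/N)·|W_{N-i}⟩⟨W_{N-i}|; precisely, the partial trace over the first i qubits of the rank-one projector |W_N⟩⟨W_N| equals (i/N) times the projector onto the all-zeros basis string of length N-i plus ((N-i)/N) times the projector onto the (N-i)-qubit W state. -/

import Mathlib

open scoped Classical

/-- The number of coordinates equal to `1` in a bit string. -/
noncomputable def onesCount {α : Type*} [Fintype α] (x : α → Fin 2) : ℕ :=
  (Finset.univ.filter fun m => x m = 1).card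

/-- The W state on qubits labeled by a finite type `α`:
amplitude `1/√|α|` on strings with exactly one `1`. -/
noncomputable def Wvec (α : Type*) [Fintype α] : (α → Fin 2) → ℂ := fun x =>
  if onesCount x = 1 then ((1 / Real.sqrt (Fintype.card α) : ℝ) : ℂ) else 0

/-- The rank-one projector `|v⟩⟨v|` of a vector `v`. -/
noncomputable def projector {ι : Type*} (v : ι → ℂ) : ι → ι → ℂ :=
  fun x x' => v x * (starRingEnd ℂ) (v x')

/-- The partial trace over the first tensor factor:
`(Tr_A M)(y,y') = ∑_a M((a,y),(a,y'))`. -/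
noncomputable def ptraceFst {A B : Type*} [Fintype A]
    (M : (A × B) → (A × B) → ℂ) : B → B → ℂ :=
  fun y y' => ∑ a : A, M (a, y) (a, y')

/-- The `(i+m)`-qubit W state under the identification of
`Fin (i+m) → Fin 2` with `(Fin i → Fin 2) × (Fin m → Fin 2)`. -/
noncomputable def Wpair (i m : ℕ) : ((Fin i → Fin 2) × (Fin m → Fin 2)) → ℂ :=
  fun p => Wvec (Fin i ⊕ Fin m) (Sum.elim p.1 p.2)

/-- The computational basis vector `|b^m⟩` on the constant string with all
coordinates equal to `b`. -/
def ketConst (m : ℕ) (b : Fin 2) : (Fin m → Fin 2) → ℂ :=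
  fun y => if y = (fun _ => b) then 1 else 0

lemma fin2_eq_zero (b : Fin 2) (h : ¬ b = 1) : b = 0 := by fin_cases b <;> simp_all

lemma onesCount_sum {i m : ℕ} (a : Fin i → Fin 2) (y : Fin m → Fin 2) :
    onesCount (Sum.elim a y) = onesCount a + onesCount y := by
  simp only [onesCount, Finset.card_filter]
  rw [Fintype.sum_sum_type]
  simp
  rw [Finset.card_filter, Finset.card_filter]
  congr 1 <;> exact Finset.sum_congr rfl fun x _ => by split_ifs <;> simp_all

lemma onesCount_eq_zero {m : ℕ} (y : Fin m → Fin 2) :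
    onesCount y = 0 ↔ y = fun _ => 0 := by
  simp only [onesCount, Finset.card_eq_zero, Finset.filter_eq_empty_iff, Finset.mem_univ,
    true_implies]
  constructor
  · intro h; funext j; exact fin2_eq_zero _ (h (x := j))
  · intro h j; rw [h]; simp

lemma card_onehot (i : ℕ) :
    (Finset.univ.filter fun a : Fin i → Fin 2 => onesCount a = 1).card = i := by
  have : (Finset.univ.filter fun a : Fin i → Fin 2 => onesCount a = 1) =
      Finset.image (fun j : Fin i => fun k => if k = j then (1 : Fin 2) else 0) Finset.univ := by
    ext a
    simp only [Finset.mem_filter, Finset.mem_univ, true_and, Finset.mem_image]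
    constructor
    · intro h
      obtain ⟨j, hj⟩ := Finset.card_eq_one.mp h
      refine ⟨j, ?_⟩
      funext k
      have hk : k ∈ Finset.univ.filter (fun m => a m = 1) ↔ k = j := by
        rw [hj]; simp
      simp only [Finset.mem_filter, Finset.mem_univ, true_and] at hk
      by_cases hkj : k = j
      · rw [if_pos hkj]; exact (hk.mpr hkj).symm
      · rw [if_neg hkj]
        exact (fin2_eq_zero _ (fun hh => hkj (hk.mp hh))).symm
    · rintro ⟨j, rfl⟩
      simp only [onesCount]
      rw [show (Finset.univ.filter fun m : Fin i => (if m = j then (1:Fin 2) else 0) = 1) = {j} by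
        ext k; by_cases h : k = j <;> simp [h]]
      simp
  rw [this, Finset.card_image_of_injective _ ?_, Finset.card_univ, Fintype.card_fin]
  intro j j' h
  have := congrFun h j
  simp at this
  by_contra hne
  exact hne this

/-- Losing `i` of the `N` qubits of a W state leaves the mixture
`σ_i = (i/N)·|0^{N-i}⟩⟨0^{N-i}| + ((N-i)/N)·|W_{N-i}⟩⟨W_{N-i}|`. -/
theorem w_state_partial_trace (N i : ℕ) (hN : 2 ≤ N) (hi1 : 1 ≤ i) (hi : i ≤ N - 1) :
    ptraceFst (projector (Wpair i (N - i))) =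
      fun y y' =>
        (((i : ℝ) / (N : ℝ) : ℝ) : ℂ) * projector (ketConst (N - i) 0) y y' +
        ((((N - i : ℕ) : ℝ) / (N : ℝ) : ℝ) : ℂ) * projector (Wvec (Fin (N - i))) y y' := by
  have hiN : i + (N - i) = N := by omega
  have hm1 : 1 ≤ N - i := by omega
  have hN0 : (N : ℝ) ≠ 0 := Nat.cast_ne_zero.mpr (by omega)
  have hm0 : ((N - i : ℕ) : ℝ) ≠ 0 := Nat.cast_ne_zero.mpr (by omega)
  have hRR : ((1 / Real.sqrt (N : ℝ) : ℝ) : ℂ) * ((1 / Real.sqrt (N : ℝ) : ℝ) : ℂ)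
      = ((1 / (N : ℝ) : ℝ) : ℂ) := by
    rw [← Complex.ofReal_mul, div_mul_div_comm, one_mul,
      Real.mul_self_sqrt (Nat.cast_nonneg N)]
  have hRRm : ((1 / Real.sqrt ((N - i : ℕ) : ℝ) : ℝ) : ℂ) *
      ((1 / Real.sqrt ((N - i : ℕ) : ℝ) : ℝ) : ℂ) = ((1 / ((N - i : ℕ) : ℝ) : ℝ) : ℂ) := by
    rw [← Complex.ofReal_mul, div_mul_div_comm, one_mul,
      Real.mul_self_sqrt (Nat.cast_nonneg _)]
  funext y y'
  simp only [ptraceFst, projector, Wpair, Wvec, ketConst, onesCount_sum, Fintype.card_sum,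
    Fintype.card_fin, hiN, apply_ite (starRingEnd ℂ), map_zero, Complex.conj_ofReal, map_one]
  obtain hy | hy | hy : onesCount y = 0 ∨ onesCount y = 1 ∨ 2 ≤ onesCount y := by omega
  · obtain hy' | hy' | hy' : onesCount y' = 0 ∨ onesCount y' = 1 ∨ 2 ≤ onesCount y' := by omega
    · -- (0,0)
      have hy0 := (onesCount_eq_zero y).mp hy
      have hy'0 := (onesCount_eq_zero y').mp hy'
      subst hy0 hy'0
      simp only [hy, add_zero, if_pos rfl, mul_one, one_mul,
        (by omega : ¬ (0:ℕ) = 1), if_neg, mul_zero, add_zero, if_false]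
      rw [Finset.sum_congr rfl (fun a _ => show _ = if onesCount a = 1 then
            ((1 / Real.sqrt (N:ℝ) : ℝ) : ℂ) * ((1 / Real.sqrt (N:ℝ) : ℝ) : ℂ) else 0 by
          split_ifs <;> simp),
        Finset.sum_ite, Finset.sum_const, Finset.sum_const, smul_zero, add_zero, card_onehot,
        nsmul_eq_mul, hRR]
      rw [← Complex.ofReal_natCast, ← Complex.ofReal_mul]
      norm_num
      ring
    · -- (0,1)
      have hy0 := (onesCount_eq_zero y).mp hy
      subst hy0
      have hne : ¬ y' = fun _ => 0 := fun h => by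
        rw [(onesCount_eq_zero y').mpr h] at hy'; omega
      rw [Finset.sum_eq_zero fun a _ => by
        have hc : ¬ (onesCount a + onesCount (fun _ : Fin (N-i) => (0:Fin 2)) = 1 ∧
            onesCount a + onesCount y' = 1) := by omega
        split_ifs with h1 h2
        · exact absurd ⟨h1, h2⟩ hc
        · exact mul_zero _
        · exact zero_mul _
        · exact zero_mul _]
      simp [hne, hy]
    · -- (0,≥2)
      have hy0 := (onesCount_eq_zero y).mp hy
      subst hy0
      have hne : ¬ y' = fun _ => 0 := fun h => by
        rw [(onesCount_eq_zero y').mpr h] at hy'; omega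
      rw [Finset.sum_eq_zero fun a _ => by
        have hc : ¬ (onesCount a + onesCount (fun _ : Fin (N-i) => (0:Fin 2)) = 1 ∧
            onesCount a + onesCount y' = 1) := by omega
        split_ifs with h1 h2
        · exact absurd ⟨h1, h2⟩ hc
        · exact mul_zero _
        · exact zero_mul _
        · exact zero_mul _]
      simp [hne, (show ¬ onesCount y' = 1 by omega)]
  · obtain hy' | hy' | hy' : onesCount y' = 0 ∨ onesCount y' = 1 ∨ 2 ≤ onesCount y' := by omega
    · -- (1,0)
      have hy'0 := (onesCount_eq_zero y').mp hy'
      subst hy'0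
      have hne : ¬ y = fun _ => 0 := fun h => by
        rw [(onesCount_eq_zero y).mpr h] at hy; omega
      rw [Finset.sum_eq_zero fun a _ => by
        have hc : ¬ (onesCount a + onesCount y = 1 ∧
            onesCount a + onesCount (fun _ : Fin (N-i) => (0:Fin 2)) = 1) := by omega
        split_ifs with h1 h2
        · exact absurd ⟨h1, h2⟩ hc
        · exact mul_zero _
        · exact zero_mul _
        · exact zero_mul _]
      simp [hne, hy']
    · -- (1,1)
      have hne : ¬ y = fun _ => 0 := fun h => by
        rw [(onesCount_eq_zero y).mpr h] at hy; omega
      have hne' : ¬ y' = fun _ => 0 := fun h => by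
        rw [(onesCount_eq_zero y').mpr h] at hy'; omega
      simp only [hy, hy', if_pos rfl, if_neg hne, if_neg hne', zero_mul, mul_zero, add_zero,
        zero_add]
      rw [Finset.sum_congr rfl (fun a _ => show _ = if a = (fun _ => (0 : Fin 2)) then
            ((1 / Real.sqrt (N:ℝ) : ℝ) : ℂ) * ((1 / Real.sqrt (N:ℝ) : ℝ) : ℂ) else 0 by
          rcases eq_or_ne a (fun _ => (0 : Fin 2)) with ha | ha
          · have h0 : onesCount a = 0 := (onesCount_eq_zero a).mpr ha
            rw [if_pos ha, if_pos (show onesCount a + 1 = 1 by omega)]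
          · have h0 : ¬ onesCount a = 0 := fun h => ha ((onesCount_eq_zero a).mp h)
            rw [if_neg ha, if_neg (show ¬ onesCount a + 1 = 1 by omega), zero_mul]),
        Finset.sum_ite_eq' Finset.univ (fun _ => (0 : Fin 2))
          (fun _ => ((1 / Real.sqrt (N:ℝ) : ℝ) : ℂ) * ((1 / Real.sqrt (N:ℝ) : ℝ) : ℂ)),
        if_pos (Finset.mem_univ _), hRR]
      simp only [if_true]
      rw [hRRm, ← Complex.ofReal_mul]
      congr 1
      field_simp
    · -- (1,≥2)
      have hne' : ¬ y' = fun _ => 0 := fun h => by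
        rw [(onesCount_eq_zero y').mpr h] at hy'; omega
      rw [Finset.sum_eq_zero fun a _ => by
        have hc : ¬ (onesCount a + onesCount y = 1 ∧ onesCount a + onesCount y' = 1) := by omega
        split_ifs with h1 h2
        · exact absurd ⟨h1, h2⟩ hc
        · exact mul_zero _
        · exact zero_mul _
        · exact zero_mul _]
      have hne : ¬ y = fun _ => 0 := fun h => by
        rw [(onesCount_eq_zero y).mpr h] at hy; omega
      simp [hne, hne', (show ¬ onesCount y' = 1 by omega)]
  · have hne : ¬ y = fun _ => 0 := fun h => by
      rw [(onesCount_eq_zero y).mpr h] at hy; omega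
    rw [Finset.sum_eq_zero fun a _ => by
      have hc : ¬ (onesCount a + onesCount y = 1 ∧ onesCount a + onesCount y' = 1) := by omega
      split_ifs with h1 h2
      · exact absurd ⟨h1, h2⟩ hc
      · exact mul_zero _
      · exact zero_mul _
      · exact zero_mul _]
    simp [hne, (show ¬ onesCount y = 1 by omega)]
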